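/- (Main theorem) Let r, k ≥ 1 and let α₁,…,α_r be reals with 1,α₁,…,α_r linearly independent over ℚ, with best-approximation sequence m_ν, quantities ζ_ν, M_ν. Define m_ν* = (m_{0,ν},…,m_{r,ν},0,…,0) ∈ ℤ^{r+k+1} (appending k zeros). Suppose Σ_ν M_{ν+1}^{r+k}(log M_{ν+1})^{δ_k} ζ_ν < ∞, where δ₁ = 1 and δ_k = 0 for k ≥ 2. Then for almost all (β₁,…,β_k) ∈ ℝ^k, the sequence of best approximations to the (r+k)-tuple (α₁,…,α_r,β₁,…,β_k) differs from the sequence (m_ν*) by at most finitely many points; that is, there exist indices ν₀ and μ₀ such that the best approximations of the extended tuple with index ≥ μ₀ are exactly the points m_ν* with ν ≥ ν₀ in order. -/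

import Mathlib

open Finset MeasureTheory

/-- The value of the linear form: `ζ(m) = m₀ + Σ mⱼ αⱼ`. -/
def zetaF {r : ℕ} (α : Fin r → ℝ) (m₀ : ℤ) (m : Fin r → ℤ) : ℝ :=
  (m₀ : ℝ) + ∑ j, (m j : ℝ) * α j

/-- `M(m) = max_{1 ≤ j ≤ r} |m_j|` (as a natural number). -/
def Mnorm {r : ℕ} (m : Fin r → ℤ) : ℕ :=
  Finset.univ.sup fun j => (m j).natAbs

/-- `m = (m₀, m₁, …, m_r)` is a best approximation (in the sense of linear form)
for `α₁, …, α_r`. -/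
def IsBestApprox {r : ℕ} (α : Fin r → ℝ) (m₀ : ℤ) (m : Fin r → ℤ) : Prop :=
  m ≠ 0 ∧ 0 < zetaF α m₀ m ∧
    ∀ (n₀ : ℤ) (n : Fin r → ℤ), n ≠ 0 → Mnorm n ≤ Mnorm m →
      zetaF α m₀ m ≤ |zetaF α n₀ n|

/-- `(mz ν, m ν)` is the sequence of all best approximations, ordered by
strictly increasing `M_ν`. -/
def IsBASeq {r : ℕ} (α : Fin r → ℝ) (mz : ℕ → ℤ) (m : ℕ → Fin r → ℤ) : Prop :=
  (∀ ν, IsBestApprox α (mz ν) (m ν)) ∧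
  StrictMono (fun ν => Mnorm (m ν)) ∧
  ∀ (p₀ : ℤ) (p : Fin r → ℤ), IsBestApprox α p₀ p → ∃ ν, p₀ = mz ν ∧ p = m ν

/-- `1, α₁, …, α_r` are linearly independent over `ℚ`. -/
def LinIndepWithOne {r : ℕ} (α : Fin r → ℝ) : Prop :=
  LinearIndependent ℚ (Fin.cons (1 : ℝ) α : Fin (r + 1) → ℝ)

/-- `(α₁, …, α_r)` is a `ψ`-singular tuple (in the sense of linear form). -/
def IsPsiSingular {r : ℕ} (α : Fin r → ℝ) (ψ : ℝ → ℝ) : Prop :=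
  ∀ T : ℝ, 1 < T → ∃ n : Fin r → ℤ, n ≠ 0 ∧ (∀ j, (|n j| : ℝ) ≤ T) ∧
    ∃ n₀ : ℤ, |zetaF α n₀ n| < ψ T

section Stmt9Aux

open scoped ENNReal

lemma aux_natAbs_le_Mnorm {r : ℕ} (q : Fin r → ℤ) (i : Fin r) : (q i).natAbs ≤ Mnorm q := by
  unfold Mnorm; exact Finset.le_sup (f := fun j => (q j).natAbs) (Finset.mem_univ i)

lemma aux_append_decomp {r k : ℕ} (q : Fin (r + k) → ℤ) :
    Fin.append (fun i => q (Fin.castAdd k i)) (fun i => q (Fin.natAdd r i)) = q := by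
  funext i
  cases i using Fin.addCases with
  | left j => simp [Fin.append_left]
  | right j => simp [Fin.append_right]

lemma aux_zeta_append {r k : ℕ} (α : Fin r → ℝ) (β : Fin k → ℝ) (n₀ : ℤ)
    (a : Fin r → ℤ) (b : Fin k → ℤ) :
    zetaF (Fin.append α β) n₀ (Fin.append a b) = zetaF α n₀ a + ∑ j, (b j : ℝ) * β j := by
  unfold zetaF
  rw [Fin.sum_univ_add]
  simp only [Fin.append_left, Fin.append_right]
  ring

lemma aux_Mnorm_append {r k : ℕ} (a : Fin r → ℤ) (b : Fin k → ℤ) :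
    Mnorm (Fin.append a b) = max (Mnorm a) (Mnorm b) := by
  apply le_antisymm
  · apply Finset.sup_le; intro i _
    cases i using Fin.addCases with
    | left j =>
        rw [Fin.append_left]
        exact le_max_of_le_left (aux_natAbs_le_Mnorm a j)
    | right j =>
        rw [Fin.append_right]
        exact le_max_of_le_right (aux_natAbs_le_Mnorm b j)
  · apply max_le
    · apply Finset.sup_le; intro j _
      have h : (a j).natAbs = ((Fin.append a b) (Fin.castAdd k j)).natAbs := by
        rw [Fin.append_left]
      rw [h]; exact aux_natAbs_le_Mnorm _ _
    · apply Finset.sup_le; intro j _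
      have h : (b j).natAbs = ((Fin.append a b) (Fin.natAdd r j)).natAbs := by
        rw [Fin.append_right]
      rw [h]; exact aux_natAbs_le_Mnorm _ _

lemma aux_Mnorm_zero {k : ℕ} : Mnorm (0 : Fin k → ℤ) = 0 := by
  simp [Mnorm]

lemma aux_Mnorm_append_zero {r k : ℕ} (a : Fin r → ℤ) :
    Mnorm (Fin.append a (0 : Fin k → ℤ)) = Mnorm a := by
  rw [aux_Mnorm_append, aux_Mnorm_zero]; exact Nat.max_zero _

lemma aux_append_zero_ne {r k : ℕ} (a : Fin r → ℤ) (ha : a ≠ 0) :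
    Fin.append a (0 : Fin k → ℤ) ≠ 0 := by
  intro h; apply ha; funext j
  have := congrFun h (Fin.castAdd k j)
  simpa [Fin.append_left] using this

lemma aux_zeta_append_zero {r k : ℕ} (α : Fin r → ℝ) (β : Fin k → ℝ) (n₀ : ℤ)
    (a : Fin r → ℤ) :
    zetaF (Fin.append α β) n₀ (Fin.append a (0 : Fin k → ℤ)) = zetaF α n₀ a := by
  rw [aux_zeta_append]; simp

lemma aux_abs_le_of_natAbs_le {z : ℤ} {N : ℕ} (h : z.natAbs ≤ N) : |z| ≤ (N : ℤ) := by
  rw [Int.abs_eq_natAbs]; exact_mod_cast h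

lemma aux_oneD (R ζ t d : ℝ) (hR : 0 ≤ R) (hζ : 0 < ζ) (ht : 1 ≤ t) :
    volume {x : ℝ | |x| ≤ R ∧ ∃ n₀ : ℤ, |(n₀ : ℝ) + d + t * x| ≤ ζ}
      ≤ ENNReal.ofReal (ζ * (4 * R + 4 * ζ + 4)) := by
  have ht0 : 0 < t := lt_of_lt_of_le one_pos ht
  set L : ℤ := ⌈-d - t * R - ζ⌉ with hL
  set U : ℤ := ⌊-d + t * R + ζ⌋ with hU
  have hsub : {x : ℝ | |x| ≤ R ∧ ∃ n₀ : ℤ, |(n₀ : ℝ) + d + t * x| ≤ ζ}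
      ⊆ ⋃ n₀ ∈ Finset.Icc L U,
        Set.Icc ((-(n₀ : ℝ) - d - ζ) / t) ((-(n₀ : ℝ) - d + ζ) / t) := by
    rintro x ⟨hx, n₀, hn⟩
    obtain ⟨hx1, hx2⟩ := abs_le.mp hx
    obtain ⟨h1, h2⟩ := abs_le.mp hn
    have htx1 : t * x ≤ t * R := by nlinarith
    have htx2 : -(t * R) ≤ t * x := by nlinarith
    simp only [Set.mem_iUnion, Set.mem_Icc, exists_prop]
    refine ⟨n₀, ?_, ?_, ?_⟩
    · rw [Finset.mem_Icc]
      constructor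
      · rw [hL, Int.ceil_le]; linarith
      · rw [hU, Int.le_floor]; linarith
    · rw [div_le_iff₀ ht0]; nlinarith
    · rw [le_div_iff₀ ht0]; nlinarith
  have hcard : ((Finset.Icc L U).card : ℝ) ≤ 2 * t * R + 2 * ζ + 2 := by
    rw [Int.card_Icc]
    have h1 : (U : ℝ) ≤ -d + t * R + ζ := Int.floor_le _
    have h2 : (-d - t * R - ζ : ℝ) ≤ (L : ℝ) := Int.le_ceil _
    rcases le_or_gt (U + 1 - L) 0 with h | h
    · rw [Int.toNat_of_nonpos h]; push_cast; positivity
    · have hc : ((U + 1 - L).toNat : ℝ) = ((U + 1 - L : ℤ) : ℝ) := by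
        exact_mod_cast congrArg (Int.cast : ℤ → ℝ) (Int.toNat_of_nonneg h.le)
      rw [hc]; push_cast; linarith
  calc volume {x : ℝ | |x| ≤ R ∧ ∃ n₀ : ℤ, |(n₀ : ℝ) + d + t * x| ≤ ζ}
      ≤ volume (⋃ n₀ ∈ Finset.Icc L U,
          Set.Icc ((-(n₀ : ℝ) - d - ζ) / t) ((-(n₀ : ℝ) - d + ζ) / t)) := measure_mono hsub
    _ ≤ ∑ n₀ ∈ Finset.Icc L U,
          volume (Set.Icc ((-(n₀ : ℝ) - d - ζ) / t) ((-(n₀ : ℝ) - d + ζ) / t)) :=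
        measure_biUnion_finset_le _ _
    _ = ∑ n₀ ∈ Finset.Icc L U, ENNReal.ofReal (2 * ζ / t) := by
        apply Finset.sum_congr rfl; intro n₀ _
        rw [Real.volume_Icc]
        congr 1
        rw [div_sub_div_same]; congr 1; ring
    _ = ((Finset.Icc L U).card : ℝ≥0∞) * ENNReal.ofReal (2 * ζ / t) := by
        rw [Finset.sum_const, nsmul_eq_mul]
    _ = ENNReal.ofReal (((Finset.Icc L U).card : ℝ) * (2 * ζ / t)) := by
        rw [← ENNReal.ofReal_natCast ((Finset.Icc L U).card), ← ENNReal.ofReal_mul (by positivity)]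
    _ ≤ ENNReal.ofReal (ζ * (4 * R + 4 * ζ + 4)) := by
        apply ENNReal.ofReal_le_ofReal
        have hdiv : 0 ≤ 2 * ζ / t := by positivity
        have h1 : ((Finset.Icc L U).card : ℝ) * (2 * ζ / t)
            ≤ (2 * t * R + 2 * ζ + 2) * (2 * ζ / t) :=
          mul_le_mul_of_nonneg_right hcard hdiv
        have h2 : t * (2 * ζ / t) = 2 * ζ := by field_simp
        have h3 : 2 * ζ / t ≤ 2 * ζ := div_le_self (by positivity) ht
        nlinarith

lemma aux_box_meas {k' : ℕ} (R : ℝ) :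
    MeasurableSet {y : Fin k' → ℝ | ∀ i, |y i| ≤ R} := by
  have h : {y : Fin k' → ℝ | ∀ i, |y i| ≤ R} = Set.pi Set.univ (fun _ => Set.Icc (-R) R) := by
    ext y; rw [Set.mem_setOf_eq, Set.mem_univ_pi]
    apply forall_congr'; intro i; rw [Set.mem_Icc, abs_le]
  rw [h]; exact MeasurableSet.univ_pi fun _ => measurableSet_Icc

lemma aux_box_vol {k' : ℕ} (R : ℝ) (hR : 0 ≤ R) :
    volume {y : Fin k' → ℝ | ∀ i, |y i| ≤ R} = ENNReal.ofReal ((2 * R) ^ k') := by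
  have h1 : {y : Fin k' → ℝ | ∀ i, |y i| ≤ R} = Set.pi Set.univ (fun _ => Set.Icc (-R) R) := by
    ext y; rw [Set.mem_setOf_eq, Set.mem_univ_pi]
    apply forall_congr'; intro i; rw [Set.mem_Icc, abs_le]
  rw [h1, volume_pi_pi]
  simp only [Real.volume_Icc]
  rw [Finset.prod_const, Finset.card_univ, Fintype.card_fin,
    ← ENNReal.ofReal_pow (by linarith : (0:ℝ) ≤ R - -R)]
  congr 1
  ring

lemma aux_slab {k' : ℕ} (R ζ c : ℝ) (hR : 0 ≤ R) (hζ : 0 < ζ)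
    (b : Fin (k' + 1) → ℤ) (hb : b ≠ 0) :
    volume {β : Fin (k' + 1) → ℝ | (∀ j, |β j| ≤ R) ∧
        ∃ n₀ : ℤ, |(n₀ : ℝ) + c + ∑ j, (b j : ℝ) * β j| ≤ ζ}
      ≤ ENNReal.ofReal ((ζ * (4 * R + 4 * ζ + 4)) * (2 * R) ^ k') := by
  obtain ⟨js, hjs⟩ : ∃ j, b j ≠ 0 := Function.ne_iff.mp hb
  set A : Set (Fin (k' + 1) → ℝ) := {β | (∀ j, |β j| ≤ R) ∧
      ∃ n₀ : ℤ, |(n₀ : ℝ) + c + ∑ j, (b j : ℝ) * β j| ≤ ζ} with hA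
  have hmeasA : MeasurableSet A := by
    have h2 : ∀ n₀ : ℤ, MeasurableSet {β : Fin (k' + 1) → ℝ |
        |(n₀ : ℝ) + c + ∑ j, (b j : ℝ) * β j| ≤ ζ} := by
      intro n₀
      have hm : Measurable fun β : Fin (k' + 1) → ℝ =>
          |(n₀ : ℝ) + c + ∑ j, (b j : ℝ) * β j| := by
        apply Measurable.abs
        apply Measurable.add measurable_const
        exact Finset.measurable_sum _ fun j _ => (measurable_pi_apply j).const_mul _
      exact hm measurableSet_Iic
    have h3 : A = {β : Fin (k' + 1) → ℝ | ∀ j, |β j| ≤ R} ∩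
        ⋃ n₀ : ℤ, {β | |(n₀ : ℝ) + c + ∑ j, (b j : ℝ) * β j| ≤ ζ} := by
      ext β; simp [hA, Set.mem_iUnion]
    rw [h3]; exact (aux_box_meas R).inter (MeasurableSet.iUnion h2)
  set e := MeasurableEquiv.piFinSuccAbove (fun _ : Fin (k' + 1) => ℝ) js with he
  have h1 : MeasurableSet (e.symm ⁻¹' A) := hmeasA.preimage e.symm.measurable
  have hsymm : ∀ (x : ℝ) (y : Fin k' → ℝ),
      e.symm (x, y) = Fin.insertNth (α := fun _ => ℝ) js x y := by
    intro x y
    rw [he, MeasurableEquiv.piFinSuccAbove_symm_apply]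
    funext j
    exact Fin.insertNthEquiv_apply _ _ _ _
  have key : volume A = ∫⁻ (y : Fin k' → ℝ), volume ((fun x => (x, y)) ⁻¹' (e.symm ⁻¹' A)) := by
    have h2 : e ⁻¹' (e.symm ⁻¹' A) = A := by ext β; simp
    calc volume A = volume (e ⁻¹' (e.symm ⁻¹' A)) := by rw [h2]
      _ = ((volume : Measure ℝ).prod (volume : Measure (Fin k' → ℝ))) (e.symm ⁻¹' A) :=
          (volume_preserving_piFinSuccAbove (fun _ : Fin (k' + 1) => ℝ) js).measure_preimage
            h1.nullMeasurableSet
      _ = ∫⁻ y, volume ((fun x => (x, y)) ⁻¹' (e.symm ⁻¹' A)) := Measure.prod_apply_symm h1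
  have hsec : ∀ y : Fin k' → ℝ, volume ((fun x => (x, y)) ⁻¹' (e.symm ⁻¹' A))
      ≤ Set.indicator {y : Fin k' → ℝ | ∀ i, |y i| ≤ R}
          (fun _ => ENNReal.ofReal (ζ * (4 * R + 4 * ζ + 4))) y := by
    intro y
    by_cases hy : y ∈ {y : Fin k' → ℝ | ∀ i, |y i| ≤ R}
    · rw [Set.indicator_of_mem hy]
      set B : ℝ := (b js : ℝ) with hBdef
      have hB1 : 1 ≤ |B| := by
        have h := Int.one_le_abs hjs
        have h' : ((1:ℤ) : ℝ) ≤ ((|b js| : ℤ) : ℝ) := by exact_mod_cast h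
        simpa [hBdef, Int.cast_abs] using h'
      set S : ℝ := ∑ i, (b (js.succAbove i) : ℝ) * y i with hS
      set d : ℝ := if 0 ≤ B then c + S else -(c + S) with hd
      have hsub : ((fun x => (x, y)) ⁻¹' (e.symm ⁻¹' A))
          ⊆ {x : ℝ | |x| ≤ R ∧ ∃ n₀ : ℤ, |(n₀ : ℝ) + d + |B| * x| ≤ ζ} := by
        intro x hx
        simp only [Set.mem_preimage] at hx
        rw [hsymm x y] at hx
        obtain ⟨hxR, n₀, hn⟩ := hx
        have hxabs : |x| ≤ R := by have := hxR js; rwa [Fin.insertNth_apply_same] at this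
        have hsum : ∑ j, (b j : ℝ) * (Fin.insertNth (α := fun _ => ℝ) js x y) j
            = B * x + S := by
          rw [Fin.sum_univ_succAbove
            (fun j => (b j : ℝ) * (Fin.insertNth (α := fun _ => ℝ) js x y) j) js]
          simp only [Fin.insertNth_apply_same, Fin.insertNth_apply_succAbove]
          rfl
        rw [hsum] at hn
        refine ⟨hxabs, ?_⟩
        rcases le_or_gt 0 B with hBp | hBn
        · refine ⟨n₀, ?_⟩
          rw [hd, if_pos hBp, abs_of_nonneg hBp]
          have h4 : (n₀ : ℝ) + (c + S) + B * x = (n₀ : ℝ) + c + (B * x + S) := by ring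
          rw [h4]; exact hn
        · refine ⟨-n₀, ?_⟩
          rw [hd, if_neg (not_le.mpr hBn), abs_of_neg hBn]
          have h4 : ((-n₀ : ℤ) : ℝ) + -(c + S) + -B * x = -((n₀ : ℝ) + c + (B * x + S)) := by
            push_cast; ring
          rw [h4, abs_neg]; exact hn
      calc volume ((fun x => (x, y)) ⁻¹' (e.symm ⁻¹' A))
          ≤ volume {x : ℝ | |x| ≤ R ∧ ∃ n₀ : ℤ, |(n₀ : ℝ) + d + |B| * x| ≤ ζ} :=
            measure_mono hsub
        _ ≤ ENNReal.ofReal (ζ * (4 * R + 4 * ζ + 4)) := aux_oneD R ζ |B| d hR hζ hB1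
    · rw [Set.indicator_of_notMem hy]
      have hempty : ((fun x => (x, y)) ⁻¹' (e.symm ⁻¹' A)) = ∅ := by
        ext x
        simp only [Set.mem_preimage, Set.mem_empty_iff_false, iff_false]
        intro hx
        rw [hsymm x y] at hx
        apply hy; intro i
        have := hx.1 (js.succAbove i)
        rwa [Fin.insertNth_apply_succAbove] at this
      rw [hempty]; simp
  rw [key]
  calc ∫⁻ y, volume ((fun x => (x, y)) ⁻¹' (e.symm ⁻¹' A))
      ≤ ∫⁻ y, Set.indicator {y : Fin k' → ℝ | ∀ i, |y i| ≤ R}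
          (fun _ => ENNReal.ofReal (ζ * (4 * R + 4 * ζ + 4))) y := lintegral_mono hsec
    _ = ENNReal.ofReal (ζ * (4 * R + 4 * ζ + 4))
          * volume {y : Fin k' → ℝ | ∀ i, |y i| ≤ R} := by
        rw [lintegral_indicator (aux_box_meas R), setLIntegral_const]
    _ = ENNReal.ofReal ((ζ * (4 * R + 4 * ζ + 4)) * (2 * R) ^ k') := by
        rw [aux_box_vol R hR, ← ENNReal.ofReal_mul (by positivity)]

lemma aux_bad (r : ℕ) {k' : ℕ} (α : Fin r → ℝ) (R ζ : ℝ) (hR : 0 ≤ R) (hζ : 0 < ζ) (Mb : ℕ) :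
    volume {β : Fin (k' + 1) → ℝ | (∀ j, |β j| ≤ R) ∧
        ∃ (n₀ : ℤ) (a : Fin r → ℤ) (b : Fin (k' + 1) → ℤ),
          b ≠ 0 ∧ (∀ j, |a j| ≤ (Mb : ℤ)) ∧ (∀ j, |b j| ≤ (Mb : ℤ)) ∧
          |zetaF α n₀ a + ∑ j, (b j : ℝ) * β j| ≤ ζ}
      ≤ ((2 * Mb + 1) ^ (r + (k' + 1)) : ℕ) *
          ENNReal.ofReal ((ζ * (4 * R + 4 * ζ + 4)) * (2 * R) ^ k') := by
  classical
  set I : Finset ℤ := Finset.Icc (-(Mb : ℤ)) (Mb : ℤ) with hI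
  set S : Finset ((Fin r → ℤ) × (Fin (k' + 1) → ℤ)) :=
    ((Fintype.piFinset fun _ : Fin r => I) ×ˢ (Fintype.piFinset fun _ : Fin (k' + 1) => I)).filter
      (fun p => p.2 ≠ 0) with hS
  have hsub : {β : Fin (k' + 1) → ℝ | (∀ j, |β j| ≤ R) ∧
        ∃ (n₀ : ℤ) (a : Fin r → ℤ) (b : Fin (k' + 1) → ℤ),
          b ≠ 0 ∧ (∀ j, |a j| ≤ (Mb : ℤ)) ∧ (∀ j, |b j| ≤ (Mb : ℤ)) ∧
          |zetaF α n₀ a + ∑ j, (b j : ℝ) * β j| ≤ ζ}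
      ⊆ ⋃ p ∈ S, {β : Fin (k' + 1) → ℝ | (∀ j, |β j| ≤ R) ∧
          ∃ n₀ : ℤ, |(n₀ : ℝ) + (∑ j, (p.1 j : ℝ) * α j) + ∑ j, (p.2 j : ℝ) * β j| ≤ ζ} := by
    rintro β ⟨hβR, n₀, a, b, hb, ha', hb', hval⟩
    simp only [Set.mem_iUnion, exists_prop]
    refine ⟨(a, b), ?_, hβR, n₀, ?_⟩
    · rw [hS, Finset.mem_filter, Finset.mem_product]
      refine ⟨⟨?_, ?_⟩, hb⟩
      · rw [Fintype.mem_piFinset]; intro j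
        rw [hI, Finset.mem_Icc, ← abs_le]; exact ha' j
      · rw [Fintype.mem_piFinset]; intro j
        rw [hI, Finset.mem_Icc, ← abs_le]; exact hb' j
    · have h : (n₀ : ℝ) + (∑ j, (a j : ℝ) * α j) + ∑ j, (b j : ℝ) * β j
          = zetaF α n₀ a + ∑ j, (b j : ℝ) * β j := by
        unfold zetaF; ring
      rw [h]; exact hval
  calc volume _ ≤ volume (⋃ p ∈ S, {β : Fin (k' + 1) → ℝ | (∀ j, |β j| ≤ R) ∧
          ∃ n₀ : ℤ, |(n₀ : ℝ) + (∑ j, (p.1 j : ℝ) * α j) + ∑ j, (p.2 j : ℝ) * β j| ≤ ζ}) :=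
        measure_mono hsub
    _ ≤ ∑ p ∈ S, volume {β : Fin (k' + 1) → ℝ | (∀ j, |β j| ≤ R) ∧
          ∃ n₀ : ℤ, |(n₀ : ℝ) + (∑ j, (p.1 j : ℝ) * α j) + ∑ j, (p.2 j : ℝ) * β j| ≤ ζ} :=
        measure_biUnion_finset_le _ _
    _ ≤ ∑ p ∈ S, ENNReal.ofReal ((ζ * (4 * R + 4 * ζ + 4)) * (2 * R) ^ k') := by
        apply Finset.sum_le_sum; intro p hp
        rw [hS, Finset.mem_filter] at hp
        exact aux_slab R ζ _ hR hζ p.2 hp.2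
    _ = (S.card : ℝ≥0∞) * ENNReal.ofReal ((ζ * (4 * R + 4 * ζ + 4)) * (2 * R) ^ k') := by
        rw [Finset.sum_const, nsmul_eq_mul]
    _ ≤ ((2 * Mb + 1) ^ (r + (k' + 1)) : ℕ) *
          ENNReal.ofReal ((ζ * (4 * R + 4 * ζ + 4)) * (2 * R) ^ k') := by
        apply mul_le_mul_left
        have hIcard : I.card = 2 * Mb + 1 := by
          rw [hI, Int.card_Icc]
          omega
        have hcard : S.card ≤ (2 * Mb + 1) ^ (r + (k' + 1)) := by
          calc S.card ≤ ((Fintype.piFinset fun _ : Fin r => I) ×ˢ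
                (Fintype.piFinset fun _ : Fin (k' + 1) => I)).card := by
                rw [hS]; exact Finset.card_filter_le _ _
            _ = (2 * Mb + 1) ^ r * (2 * Mb + 1) ^ (k' + 1) := by
                rw [Finset.card_product, Fintype.card_piFinset, Fintype.card_piFinset]
                simp [hIcard]
            _ = (2 * Mb + 1) ^ (r + (k' + 1)) := (pow_add _ _ _).symm
        exact_mod_cast Nat.cast_le.mpr hcard

end Stmt9Aux

/-- main theorem. If `Σ M_{ν+1}^{r+k}(log M_{ν+1})^{δ_k} ζ_ν < ∞`, then for
almost all `β ∈ ℝ^k` the best approximation sequence of `(α, β)` eventually coincides, in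
order, with the sequence `m_ν* = (m_ν, 0, …, 0)`. -/
theorem stmt9 (r k : ℕ) (hr : 1 ≤ r) (hk : 1 ≤ k) (α : Fin r → ℝ) (hα : LinIndepWithOne α)
    (mz : ℕ → ℤ) (m : ℕ → Fin r → ℤ) (hBA : IsBASeq α mz m)
    (hsum : Summable fun ν => (Mnorm (m (ν + 1)) : ℝ) ^ (r + k) *
      (if k = 1 then Real.log (Mnorm (m (ν + 1))) else 1) * zetaF α (mz ν) (m ν)) :
    ∀ᵐ β : Fin k → ℝ,
      ∀ (nz : ℕ → ℤ) (n : ℕ → Fin (r + k) → ℤ),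
        IsBASeq (Fin.append α β) nz n →
        ∃ ν₀ μ₀ : ℕ, ∀ i : ℕ,
          nz (μ₀ + i) = mz (ν₀ + i) ∧
          n (μ₀ + i) = Fin.append (m (ν₀ + i)) (0 : Fin k → ℤ) := by
  classical
  obtain ⟨k', rfl⟩ : ∃ k', k = k' + 1 := ⟨k - 1, by omega⟩
  obtain ⟨hBA1, hBA2, hBA3⟩ := hBA
  -- basic facts about the given best approximation sequence
  have hζpos : ∀ ν, 0 < zetaF α (mz ν) (m ν) := fun ν => (hBA1 ν).2.1
  have hζanti : ∀ ν, zetaF α (mz (ν+1)) (m (ν+1)) ≤ zetaF α (mz ν) (m ν) := by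
    intro ν
    have h := (hBA1 (ν+1)).2.2 (mz ν) (m ν) (hBA1 ν).1 (le_of_lt (hBA2 (lt_add_one ν)))
    rwa [abs_of_pos (hζpos ν)] at h
  have hζν0 : ∀ ν, zetaF α (mz ν) (m ν) ≤ zetaF α (mz 0) (m 0) := by
    intro ν
    induction ν with
    | zero => exact le_rfl
    | succ ν ih => exact le_trans (hζanti ν) ih
  have hM0 : 1 ≤ Mnorm (m 0) := by
    obtain ⟨j, hj⟩ := Function.ne_iff.mp (hBA1 0).1
    have h1 : 1 ≤ (m 0 j).natAbs := Int.natAbs_pos.mpr (by simpa using hj)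
    exact le_trans h1 (aux_natAbs_le_Mnorm _ j)
  have hM1 : ∀ ν, 1 ≤ Mnorm (m ν) := fun ν => le_trans hM0 (hBA2.monotone (Nat.zero_le ν))
  have hM2 : ∀ ν, 2 ≤ Mnorm (m (ν+1)) := by
    intro ν
    have h0 : Mnorm (m 0) < Mnorm (m (ν+1)) := hBA2 (Nat.succ_pos ν)
    omega
  -- summability without the logarithmic factor
  have hg : Summable (fun ν => (Mnorm (m (ν+1)) : ℝ) ^ (r + (k' + 1)) * zetaF α (mz ν) (m ν)) := by
    by_cases hk1 : k' = 0
    · subst hk1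
      simp only [if_pos rfl] at hsum
      have hlog2 : 0 < Real.log 2 := Real.log_pos (by norm_num)
      apply Summable.of_nonneg_of_le
        (fun ν => mul_nonneg (by positivity) (hζpos ν).le)
        (fun ν => ?_) (hsum.mul_left (Real.log 2)⁻¹)
      have hMc : (2:ℝ) ≤ (Mnorm (m (ν+1)) : ℝ) := by exact_mod_cast hM2 ν
      have hlogM : Real.log 2 ≤ Real.log (Mnorm (m (ν+1))) :=
        Real.log_le_log (by norm_num) hMc
      have hX : (0:ℝ) ≤ (Mnorm (m (ν+1)) : ℝ) ^ (r + (0 + 1)) := by positivity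
      have h1 : (Mnorm (m (ν+1)) : ℝ) ^ (r + (0 + 1)) * Real.log 2 * zetaF α (mz ν) (m ν)
          ≤ (Mnorm (m (ν+1)) : ℝ) ^ (r + (0 + 1)) * Real.log (Mnorm (m (ν+1)))
            * zetaF α (mz ν) (m ν) :=
        mul_le_mul_of_nonneg_right (mul_le_mul_of_nonneg_left hlogM hX) (hζpos ν).le
      have h2 : (Mnorm (m (ν+1)) : ℝ) ^ (r + (0 + 1)) * zetaF α (mz ν) (m ν)
          = (Real.log 2)⁻¹ * ((Mnorm (m (ν+1)) : ℝ) ^ (r + (0 + 1)) * Real.log 2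
            * zetaF α (mz ν) (m ν)) := by
        field_simp
      rw [h2]
      exact mul_le_mul_of_nonneg_left h1 (by positivity)
    · have hne : k' + 1 ≠ 1 := by omega
      simp only [if_neg hne, mul_one] at hsum
      exact hsum
  -- the bad sets
  set Bad : ℕ → ℕ → Set (Fin (k'+1) → ℝ) := fun R ν =>
    {β | (∀ j, |β j| ≤ (R : ℝ)) ∧ ∃ (n₀ : ℤ) (a : Fin r → ℤ) (b : Fin (k'+1) → ℤ),
      b ≠ 0 ∧ (∀ j, |a j| ≤ (Mnorm (m (ν+1)) : ℤ)) ∧ (∀ j, |b j| ≤ (Mnorm (m (ν+1)) : ℤ)) ∧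
      |zetaF α n₀ a + ∑ j, (b j : ℝ) * β j| ≤ zetaF α (mz ν) (m ν)} with hBadDef
  have htsum : ∀ R : ℕ, (∑' ν, volume (Bad R ν)) ≠ ⊤ := by
    intro R
    set ζ0 : ℝ := zetaF α (mz 0) (m 0) with hζ0
    have hζ0pos : 0 < ζ0 := hζpos 0
    set C : ℝ := 3 ^ (r + (k'+1)) * ((4 * (R:ℝ) + 4 * ζ0 + 4) * (2 * (R:ℝ)) ^ k') with hC
    have hCnn : 0 ≤ C := by positivity
    have hbound : ∀ ν, volume (Bad R ν)
        ≤ ENNReal.ofReal (C * ((Mnorm (m (ν+1)) : ℝ) ^ (r + (k'+1)) * zetaF α (mz ν) (m ν))) := by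
      intro ν
      refine le_trans (aux_bad r α (R:ℝ) (zetaF α (mz ν) (m ν)) (Nat.cast_nonneg R)
        (hζpos ν) (Mnorm (m (ν+1)))) ?_
      rw [← ENNReal.ofReal_natCast, ← ENNReal.ofReal_mul (by positivity)]
      apply ENNReal.ofReal_le_ofReal
      have hMc : (1:ℝ) ≤ (Mnorm (m (ν+1)) : ℝ) := by exact_mod_cast hM1 (ν+1)
      have hz := hζpos ν
      have hz0 := hζν0 ν
      have hRnn : (0:ℝ) ≤ (R:ℝ) := Nat.cast_nonneg R
      have hcast : (((2 * Mnorm (m (ν+1)) + 1) ^ (r + (k'+1)) : ℕ) : ℝ)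
          = (2 * (Mnorm (m (ν+1)) : ℝ) + 1) ^ (r + (k'+1)) := by push_cast; ring
      rw [hcast, hC]
      have h2 : (2 * (Mnorm (m (ν+1)) : ℝ) + 1) ^ (r + (k'+1))
          ≤ (3 * (Mnorm (m (ν+1)) : ℝ)) ^ (r + (k'+1)) :=
        pow_le_pow_left₀ (by linarith) (by linarith) _
      have h3 : (zetaF α (mz ν) (m ν) * (4*(R:ℝ) + 4*zetaF α (mz ν) (m ν) + 4)) * (2*(R:ℝ))^k'
          ≤ (zetaF α (mz ν) (m ν) * (4*(R:ℝ) + 4*ζ0 + 4)) * (2*(R:ℝ))^k' := by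
        apply mul_le_mul_of_nonneg_right _ (by positivity)
        apply mul_le_mul_of_nonneg_left (by linarith) hz.le
      calc (2 * (Mnorm (m (ν+1)) : ℝ) + 1) ^ (r + (k'+1)) *
            ((zetaF α (mz ν) (m ν) * (4*(R:ℝ) + 4*zetaF α (mz ν) (m ν) + 4)) * (2*(R:ℝ))^k')
          ≤ (3 * (Mnorm (m (ν+1)) : ℝ)) ^ (r + (k'+1)) *
            ((zetaF α (mz ν) (m ν) * (4*(R:ℝ) + 4*ζ0 + 4)) * (2*(R:ℝ))^k') :=
            mul_le_mul h2 h3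
              (mul_nonneg (mul_nonneg hz.le (by linarith)) (by positivity)) (by positivity)
        _ = 3 ^ (r + (k'+1)) * ((4 * (R:ℝ) + 4 * ζ0 + 4) * (2 * (R:ℝ)) ^ k') *
            ((Mnorm (m (ν+1)) : ℝ) ^ (r + (k'+1)) * zetaF α (mz ν) (m ν)) := by
            rw [mul_pow]; ring
    have hle : (∑' ν, volume (Bad R ν))
        ≤ ∑' ν, ENNReal.ofReal (C * ((Mnorm (m (ν+1)) : ℝ) ^ (r + (k'+1))
            * zetaF α (mz ν) (m ν))) := ENNReal.tsum_le_tsum hbound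
    rw [← ENNReal.ofReal_tsum_of_nonneg
      (fun ν => mul_nonneg hCnn (mul_nonneg (by positivity) (hζpos ν).le))
      (hg.mul_left C)] at hle
    exact ne_top_of_le_ne_top ENNReal.ofReal_ne_top hle
  have hae : ∀ᵐ β : Fin (k'+1) → ℝ, ∀ R : ℕ, ∀ᶠ ν in Filter.atTop, β ∉ Bad R ν :=
    ae_all_iff.mpr fun R => ae_eventually_notMem (htsum R)
  filter_upwards [hae] with β hβ
  intro nz n hn
  obtain ⟨hn1, hn2, hn3⟩ := hn
  obtain ⟨R, hR⟩ : ∃ R : ℕ, ∀ j, |β j| ≤ (R : ℝ) := by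
    obtain ⟨R, hR⟩ := exists_nat_ge (∑ j, |β j|)
    exact ⟨R, fun j => le_trans (Finset.single_le_sum
      (fun i _ => abs_nonneg (β i)) (Finset.mem_univ j)) hR⟩
  obtain ⟨N, hN⟩ := Filter.eventually_atTop.mp (hβ R)
  -- the key property of good β
  have key : ∀ ν, N ≤ ν → ∀ (q₀ : ℤ) (q : Fin (r + (k'+1)) → ℤ),
      (fun i => q (Fin.natAdd r i)) ≠ 0 → Mnorm q < Mnorm (m (ν+1)) →
      zetaF α (mz ν) (m ν) < |zetaF (Fin.append α β) q₀ q| := by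
    intro ν hν q₀ q hq hM
    by_contra hcon
    push_neg at hcon
    apply hN ν hν
    rw [hBadDef]
    refine ⟨hR, q₀, (fun i => q (Fin.castAdd (k'+1) i)), (fun i => q (Fin.natAdd r i)),
      hq, ?_, ?_, ?_⟩
    · intro j
      exact aux_abs_le_of_natAbs_le (((aux_natAbs_le_Mnorm q _).trans_lt hM).le)
    · intro j
      exact aux_abs_le_of_natAbs_le (((aux_natAbs_le_Mnorm q _).trans_lt hM).le)
    · have h : zetaF α q₀ (fun i => q (Fin.castAdd (k'+1) i))
          + ∑ j, ((q (Fin.natAdd r j) : ℝ)) * β j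
          = zetaF (Fin.append α β) q₀ q := by
        conv_rhs => rw [← aux_append_decomp q]
        rw [aux_zeta_append]
      rw [h]
      exact hcon
  -- the points m_ν* are best approximations of the extended tuple for ν ≥ N
  have extBA : ∀ ν, N ≤ ν →
      IsBestApprox (Fin.append α β) (mz ν) (Fin.append (m ν) (0 : Fin (k'+1) → ℤ)) := by
    intro ν hν
    refine ⟨aux_append_zero_ne _ (hBA1 ν).1, ?_, ?_⟩
    · rw [aux_zeta_append_zero]; exact hζpos ν
    · intro q₀ q hq hMq
      rw [aux_Mnorm_append_zero] at hMq
      rw [aux_zeta_append_zero]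
      by_cases hb : (fun i => q (Fin.natAdd r i)) = (0 : Fin (k'+1) → ℤ)
      · set a : Fin r → ℤ := fun i => q (Fin.castAdd (k'+1) i) with hadef
        have hqa : q = Fin.append a (0 : Fin (k'+1) → ℤ) := by
          conv_lhs => rw [← aux_append_decomp q]
          rw [hb]
        have haz : a ≠ 0 := by
          intro h0; apply hq
          rw [hqa, h0]
          funext i; cases i using Fin.addCases <;> simp
        have hMa : Mnorm a ≤ Mnorm (m ν) := by
          rw [hqa, aux_Mnorm_append_zero] at hMq; exact hMq
        have h := (hBA1 ν).2.2 q₀ a haz hMa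
        rw [hqa, aux_zeta_append_zero]
        exact h
      · have hMq2 : Mnorm q < Mnorm (m (ν+1)) := lt_of_le_of_lt hMq (hBA2 (lt_add_one ν))
        exact le_of_lt (key ν hν q₀ q hb hMq2)
  -- every extended best approximation with large norm is some m_ν*
  have uniq : ∀ (p₀ : ℤ) (p : Fin (r + (k'+1)) → ℤ),
      IsBestApprox (Fin.append α β) p₀ p → Mnorm (m N) ≤ Mnorm p →
      ∃ ν, N ≤ ν ∧ Mnorm (m ν) = Mnorm p ∧ p₀ = mz ν ∧
        p = Fin.append (m ν) (0 : Fin (k'+1) → ℤ) := by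
    intro p₀ p hp hNp
    set ν := Nat.findGreatest (fun ν => Mnorm (m ν) ≤ Mnorm p) (Mnorm p) with hνdef
    have hNle : N ≤ Mnorm p := le_trans hBA2.le_apply hNp
    have hν1 : Mnorm (m ν) ≤ Mnorm p :=
      Nat.findGreatest_spec (P := fun ν => Mnorm (m ν) ≤ Mnorm p) hNle hNp
    have hνge : N ≤ ν :=
      Nat.le_findGreatest (P := fun ν => Mnorm (m ν) ≤ Mnorm p) hNle hNp
    have hν2 : Mnorm p < Mnorm (m (ν+1)) := by
      by_contra hcon; push_neg at hcon
      have h1 : ν + 1 ≤ Mnorm p := le_trans hBA2.le_apply hcon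
      have h2 : ν + 1 ≤ ν :=
        Nat.le_findGreatest (P := fun ν => Mnorm (m ν) ≤ Mnorm p) h1 hcon
      omega
    have hple : zetaF (Fin.append α β) p₀ p ≤ zetaF α (mz ν) (m ν) := by
      have h := hp.2.2 (mz ν) (Fin.append (m ν) (0 : Fin (k'+1) → ℤ))
        (aux_append_zero_ne _ (hBA1 ν).1) (by rw [aux_Mnorm_append_zero]; exact hν1)
      rwa [aux_zeta_append_zero, abs_of_pos (hζpos ν)] at h
    have hb : (fun i => p (Fin.natAdd r i)) = (0 : Fin (k'+1) → ℤ) := by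
      by_contra hb
      have h := key ν hνge p₀ p hb hν2
      rw [abs_of_pos hp.2.1] at h
      linarith
    set a : Fin r → ℤ := fun i => p (Fin.castAdd (k'+1) i) with hadef
    have hpa : p = Fin.append a (0 : Fin (k'+1) → ℤ) := by
      conv_lhs => rw [← aux_append_decomp p]
      rw [hb]
    have haz : a ≠ 0 := by
      intro h0; apply hp.1
      rw [hpa, h0]
      funext i; cases i using Fin.addCases <;> simp
    have hMa : Mnorm a = Mnorm p := by
      conv_rhs => rw [hpa]
      rw [aux_Mnorm_append_zero]
    have hBAa : IsBestApprox α p₀ a := by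
      refine ⟨haz, ?_, ?_⟩
      · have h := hp.2.1
        rwa [hpa, aux_zeta_append_zero] at h
      · intro q₀ q hq hMq
        have h := hp.2.2 q₀ (Fin.append q (0 : Fin (k'+1) → ℤ)) (aux_append_zero_ne _ hq)
          (by rw [aux_Mnorm_append_zero]; exact hMq.trans hMa.le)
        rwa [hpa, aux_zeta_append_zero, aux_zeta_append_zero] at h
    obtain ⟨ν', hν'1, hν'2⟩ := hBA3 p₀ a hBAa
    have hMν' : Mnorm (m ν') = Mnorm p := by rw [← hν'2]; exact hMa
    have hee : ν' = ν := by
      have l1 : ν ≤ ν' := by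
        apply hBA2.le_iff_le.mp
        show Mnorm (m ν) ≤ Mnorm (m ν')
        rw [hMν']; exact hν1
      have l2 : ν' < ν + 1 := by
        apply hBA2.lt_iff_lt.mp
        show Mnorm (m ν') < Mnorm (m (ν+1))
        rw [hMν']; exact hν2
      omega
    refine ⟨ν, hνge, ?_, ?_, ?_⟩
    · rw [← hee]; exact hMν'
    · rw [← hee]; exact hν'1
    · rw [← hee, ← hν'2]; exact hpa
  -- conclusion
  obtain ⟨μ₀, hμ1, hμ2⟩ := hn3 (mz N) (Fin.append (m N) (0 : Fin (k'+1) → ℤ)) (extBA N le_rfl)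
  refine ⟨N, μ₀, ?_⟩
  intro i
  induction i with
  | zero => exact ⟨hμ1.symm, hμ2.symm⟩
  | succ i ih =>
    obtain ⟨ih1, ih2⟩ := ih
    have hq : IsBestApprox (Fin.append α β) (nz (μ₀+i+1)) (n (μ₀+i+1)) := hn1 _
    have hMgt : Mnorm (m (N+i)) < Mnorm (n (μ₀+i+1)) := by
      have h := hn2 (lt_add_one (μ₀+i))
      have h2 : Mnorm (n (μ₀ + i)) < Mnorm (n (μ₀ + i + 1)) := h
      rw [ih2, aux_Mnorm_append_zero] at h2
      exact h2
    have hge : Mnorm (m N) ≤ Mnorm (n (μ₀+i+1)) :=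
      le_of_lt (lt_of_le_of_lt (hBA2.monotone (Nat.le_add_right N i)) hMgt)
    obtain ⟨ν', hν'N, hν'M, hν'z, hν'e⟩ := uniq _ _ hq hge
    have hgt : N + i < ν' := by
      apply hBA2.lt_iff_lt.mp
      show Mnorm (m (N+i)) < Mnorm (m ν')
      rw [hν'M]; exact hMgt
    have hlt : ν' ≤ N + i + 1 := by
      by_contra hcon; push_neg at hcon
      obtain ⟨μ', hμ'1, hμ'2⟩ := hn3 (mz (N+i+1)) (Fin.append (m (N+i+1)) (0 : Fin (k'+1) → ℤ))
        (extBA (N+i+1) (by omega))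
      have c1 : μ₀ + i < μ' := by
        apply hn2.lt_iff_lt.mp
        show Mnorm (n (μ₀+i)) < Mnorm (n μ')
        rw [← hμ'2, aux_Mnorm_append_zero, ih2, aux_Mnorm_append_zero]
        exact hBA2 (by omega)
      have c2 : μ' < μ₀ + i + 1 := by
        apply hn2.lt_iff_lt.mp
        show Mnorm (n μ') < Mnorm (n (μ₀+i+1))
        rw [← hμ'2, aux_Mnorm_append_zero, ← hν'M]
        exact hBA2 hcon
      omega
    have heq : ν' = N + i + 1 := by omega
    constructor
    · show nz (μ₀ + i + 1) = mz (N + i + 1)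
      rw [hν'z, heq]
    · show n (μ₀ + i + 1) = Fin.append (m (N + i + 1)) (0 : Fin (k'+1) → ℤ)
      rw [hν'e, heq]
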